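/- arXiv:2311.15945 — 2 statements merged into one kernel-verified Lean document; each statement's English description precedes it below -/
import Mathlib

section
/- Let V be a finite vertex set, d, m ≥ 1, and let Ã : V × V → ℝ be a matrix with nonnegative entries. Fix c_σ, w, β_E, β_L ≥ 0. Let σ : ℝ^d → ℝ^d be differentiable with ‖Dσ(y)‖ ≤ c_σ for all y, for each layer index ℓ ∈ ℕ let W^(ℓ) : ℝ^d → ℝ^d be a linear map with operator norm ‖W^(ℓ)‖ ≤ w, and for each node i ∈ V and layer ℓ let E_{i,ℓ} : ℝ^d → ℝ^d and L_{i,ℓ} : ℝ^d → ℝ^d be differentiable maps with ‖DE_{i,ℓ}(y)‖ ≤ β_E and ‖DL_{i,ℓ}(y)‖ ≤ β_L for all y. Define layer maps F^(ℓ) : (V → ℝ^d) → (V → ℝ^d) by F^(ℓ)(x)_i = σ(E_{i,ℓ}(∑_{z ∈ V} Ã_{iz} W^(ℓ)(L_{i,ℓ}(x_z)))), and set X^(ℓ) = F^(ℓ-1) ∘ ⋯ ∘ F^(0). Then for every ℓ ≥ 0, every x : V → ℝ^d, and all i, j ∈ V, the operator norm of the block of the total derivative of X^(ℓ) at x sending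 variations of the j-th input coordinate to the i-th output coordinate (i.e. the norm of π_i ∘ DX^(ℓ)(x) ∘ ι_j, where ι_j : ℝ^d → (V → ℝ^d) inserts a vector at coordinate j and π_i projects to coordinate i) is at most c_σ^ℓ w^ℓ (β_E β_L)^ℓ (Ã^ℓ)_{ij}. -/
set_option maxHeartbeats 1000000
set_option synthInstance.maxHeartbeats 400000


open ContinuousLinearMap in
/-- The coordinate insertion map `ι_j : ℝ^d → (V → ℝ^d)` placing a vector at
coordinate `j` and `0` elsewhere, as a continuous linear map. -/
noncomputable def coordIncl {V : Type*} [DecidableEq V] (E : Type*)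
    [NormedAddCommGroup E] [NormedSpace ℝ E] (j : V) : E →L[ℝ] (V → E) :=
  ContinuousLinearMap.pi (fun z => if z = j then ContinuousLinearMap.id ℝ E else 0)

open ContinuousLinearMap in
lemma proj_comp_coordIncl {V : Type*} [DecidableEq V] (E : Type*)
    [NormedAddCommGroup E] [NormedSpace ℝ E] (i j : V) :
    (ContinuousLinearMap.proj (R := ℝ) (φ := fun _ : V => E) i).comp
      (coordIncl E j) = if i = j then ContinuousLinearMap.id ℝ E else 0 := by
  ext v
  by_cases h : i = j <;> simp [coordIncl, h]

lemma clm_sum_comp {ι E₁ E₂ E₃ : Type*} [NormedAddCommGroup E₁] [NormedSpace ℝ E₁]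
    [NormedAddCommGroup E₂] [NormedSpace ℝ E₂] [NormedAddCommGroup E₃] [NormedSpace ℝ E₃]
    (s : Finset ι) (f : ι → E₂ →L[ℝ] E₃) (h : E₁ →L[ℝ] E₂) :
    (∑ z ∈ s, f z).comp h = ∑ z ∈ s, (f z).comp h := by
  ext v; simp

/-- Theorem 1 of the paper (sensitivity bound for Riemannian GNNs), with the exponential
and logarithmic maps replaced by arbitrary differentiable maps `E i ℓ`, `L i ℓ` whose
differentials are uniformly bounded in operator norm by `βE`, `βL`. For layer maps
`F ℓ x i = σ (E i ℓ (∑ z, Ã i z • W ℓ (L i ℓ (x z))))` and their compositions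
`X ℓ = F (ℓ-1) ∘ ⋯ ∘ F 0`, the operator norm of the `(i, j)` block
`π_i ∘ D(X ℓ)(x) ∘ ι_j` of the total derivative is at most
`cσ^ℓ * w^ℓ * (βE * βL)^ℓ * (Ã^ℓ) i j`. -/
theorem riemannian_gnn_jacobian_bound
    {V : Type*} [Fintype V] [DecidableEq V] {d m : ℕ} (hd : 1 ≤ d) (hm : 1 ≤ m)
    (A : Matrix V V ℝ) (hA : ∀ i j, 0 ≤ A i j)
    (cσ w βE βL : ℝ) (hcσ : 0 ≤ cσ) (hw : 0 ≤ w) (hβE : 0 ≤ βE) (hβL : 0 ≤ βL)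
    (σ : EuclideanSpace ℝ (Fin d) → EuclideanSpace ℝ (Fin d))
    (hσ : Differentiable ℝ σ) (hσ' : ∀ y, ‖fderiv ℝ σ y‖ ≤ cσ)
    (W : ℕ → EuclideanSpace ℝ (Fin d) →L[ℝ] EuclideanSpace ℝ (Fin d))
    (hW : ∀ ℓ, ‖W ℓ‖ ≤ w)
    (E L : V → ℕ → EuclideanSpace ℝ (Fin d) → EuclideanSpace ℝ (Fin d))
    (hE : ∀ i ℓ, Differentiable ℝ (E i ℓ)) (hE' : ∀ i ℓ y, ‖fderiv ℝ (E i ℓ) y‖ ≤ βE)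
    (hL : ∀ i ℓ, Differentiable ℝ (L i ℓ)) (hL' : ∀ i ℓ y, ‖fderiv ℝ (L i ℓ) y‖ ≤ βL)
    (F : ℕ → (V → EuclideanSpace ℝ (Fin d)) → (V → EuclideanSpace ℝ (Fin d)))
    (hF : ∀ ℓ x i, F ℓ x i = σ (E i ℓ (∑ z, A i z • W ℓ (L i ℓ (x z)))))
    (X : ℕ → (V → EuclideanSpace ℝ (Fin d)) → (V → EuclideanSpace ℝ (Fin d)))
    (hX0 : X 0 = id) (hXs : ∀ ℓ, X (ℓ + 1) = F ℓ ∘ X ℓ) :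
    ∀ (ℓ : ℕ) (x : V → EuclideanSpace ℝ (Fin d)) (i j : V),
      ‖(ContinuousLinearMap.proj (R := ℝ)
            (φ := fun _ : V => EuclideanSpace ℝ (Fin d)) i).comp
          ((fderiv ℝ (X ℓ) x).comp (coordIncl (EuclideanSpace ℝ (Fin d)) j))‖ ≤
        cσ ^ ℓ * w ^ ℓ * (βE * βL) ^ ℓ * (A ^ ℓ) i j := by
  -- the `g` function and its derivative
  set g : V → ℕ → (V → EuclideanSpace ℝ (Fin d)) → EuclideanSpace ℝ (Fin d) :=
    fun i ℓ y => ∑ z, A i z • W ℓ (L i ℓ (y z)) with hg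
  set G : V → ℕ → (V → EuclideanSpace ℝ (Fin d)) →
      ((V → EuclideanSpace ℝ (Fin d)) →L[ℝ] EuclideanSpace ℝ (Fin d)) := fun i ℓ y =>
    ∑ z, A i z • ((W ℓ).comp ((fderiv ℝ (L i ℓ) (y z)).comp
      (ContinuousLinearMap.proj (R := ℝ) (φ := fun _ : V => EuclideanSpace ℝ (Fin d)) z)))
    with hG
  have hgD : ∀ i ℓ (y : V → EuclideanSpace ℝ (Fin d)), HasFDerivAt (g i ℓ) (G i ℓ y) y := by
    intro i ℓ y
    apply HasFDerivAt.fun_sum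
    intro z _
    have h1 : HasFDerivAt (fun x : V → EuclideanSpace ℝ (Fin d) => x z)
        (ContinuousLinearMap.proj (R := ℝ) (φ := fun _ : V => EuclideanSpace ℝ (Fin d)) z)
        y :=
      (ContinuousLinearMap.proj (R := ℝ)
        (φ := fun _ : V => EuclideanSpace ℝ (Fin d)) z).hasFDerivAt
    have h2 : HasFDerivAt (fun x : V → EuclideanSpace ℝ (Fin d) => L i ℓ (x z))
        ((fderiv ℝ (L i ℓ) (y z)).comp
          (ContinuousLinearMap.proj (R := ℝ) (φ := fun _ : V => EuclideanSpace ℝ (Fin d)) z))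
        y := ((hL i ℓ (y z)).hasFDerivAt).comp y h1
    have h3 := ((W ℓ).hasFDerivAt).comp y h2
    exact h3.const_smul (A i z)
  -- derivative of F ℓ
  set DF : ℕ → (V → EuclideanSpace ℝ (Fin d)) →
      ((V → EuclideanSpace ℝ (Fin d)) →L[ℝ] (V → EuclideanSpace ℝ (Fin d))) := fun ℓ y =>
    ContinuousLinearMap.pi (fun i =>
      (fderiv ℝ σ (E i ℓ (g i ℓ y))).comp
        ((fderiv ℝ (E i ℓ) (g i ℓ y)).comp (G i ℓ y))) with hDF
  have hFD : ∀ ℓ (y : V → EuclideanSpace ℝ (Fin d)), HasFDerivAt (F ℓ) (DF ℓ y) y := by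
    intro ℓ y
    apply hasFDerivAt_pi''
    intro i
    have hcoord : (fun x : V → EuclideanSpace ℝ (Fin d) => F ℓ x i) =
        fun x => σ (E i ℓ (g i ℓ x)) := by
      funext x; rw [hF]
    rw [hcoord, hDF, ContinuousLinearMap.proj_pi]
    exact ((hσ _).hasFDerivAt).comp y (((hE i ℓ _).hasFDerivAt).comp y (hgD i ℓ y))
  -- differentiability of X ℓ
  have hXdiff : ∀ ℓ (y : V → EuclideanSpace ℝ (Fin d)), DifferentiableAt ℝ (X ℓ) y := by
    intro ℓ
    induction ℓ with
    | zero => intro y; rw [hX0]; exact differentiableAt_id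
    | succ n ihn =>
      intro y
      rw [hXs n]
      exact ((hFD n (X n y)).differentiableAt).comp y (ihn y)
  -- main induction
  intro ℓ
  induction ℓ with
  | zero =>
    intro x i j
    rw [hX0, fderiv_id]
    simp only [pow_zero, one_mul]
    rw [ContinuousLinearMap.id_comp, proj_comp_coordIncl, Matrix.one_apply]
    by_cases h : i = j
    · simp only [h, if_pos rfl]
      exact ContinuousLinearMap.norm_id_le
    · simp [h]
  | succ ℓ ih =>
    intro x i j
    have hstep : HasFDerivAt (X (ℓ + 1)) ((DF ℓ (X ℓ x)).comp (fderiv ℝ (X ℓ) x)) x := by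
      rw [hXs ℓ]
      exact (hFD ℓ (X ℓ x)).comp x (hXdiff ℓ x).hasFDerivAt
    rw [hstep.fderiv]
    set y := X ℓ x
    set D := fderiv ℝ (X ℓ) x
    have hblock :
        (ContinuousLinearMap.proj (R := ℝ)
            (φ := fun _ : V => EuclideanSpace ℝ (Fin d)) i).comp
            (((DF ℓ y).comp D).comp (coordIncl (EuclideanSpace ℝ (Fin d)) j)) =
          ((fderiv ℝ σ (E i ℓ (g i ℓ y))).comp ((fderiv ℝ (E i ℓ) (g i ℓ y)).comp
            (∑ z, A i z • ((W ℓ).comp ((fderiv ℝ (L i ℓ) (y z)).comp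
              ((ContinuousLinearMap.proj (R := ℝ)
                  (φ := fun _ : V => EuclideanSpace ℝ (Fin d)) z).comp
                (D.comp (coordIncl (EuclideanSpace ℝ (Fin d)) j)))))))) := by
      rw [← ContinuousLinearMap.comp_assoc, ← ContinuousLinearMap.comp_assoc, hDF]
      simp only [ContinuousLinearMap.proj_pi]
      rw [ContinuousLinearMap.comp_assoc, ContinuousLinearMap.comp_assoc]
      congr 1
      rw [ContinuousLinearMap.comp_assoc]
      congr 1
      simp only [hG]
      rw [clm_sum_comp]
      refine Finset.sum_congr rfl fun z _ => ?_
      rw [ContinuousLinearMap.smul_comp, ContinuousLinearMap.comp_assoc,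
        ContinuousLinearMap.comp_assoc]
    rw [hblock]
    have hsum : ‖∑ z, A i z • ((W ℓ).comp ((fderiv ℝ (L i ℓ) (y z)).comp
        ((ContinuousLinearMap.proj (R := ℝ)
            (φ := fun _ : V => EuclideanSpace ℝ (Fin d)) z).comp
          (D.comp (coordIncl (EuclideanSpace ℝ (Fin d)) j)))))‖ ≤
        ∑ z, A i z * (w * (βL * (cσ ^ ℓ * w ^ ℓ * (βE * βL) ^ ℓ * (A ^ ℓ) z j))) := by
      refine (norm_sum_le _ _).trans (Finset.sum_le_sum fun z _ => ?_)
      refine le_trans (ContinuousLinearMap.opNorm_smul_le _ _) ?_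
      rw [Real.norm_eq_abs, abs_of_nonneg (hA i z)]
      refine mul_le_mul_of_nonneg_left ?_ (hA i z)
      refine (ContinuousLinearMap.opNorm_comp_le _ _).trans ?_
      refine mul_le_mul (hW ℓ) ?_ (norm_nonneg _) hw
      refine (ContinuousLinearMap.opNorm_comp_le _ _).trans ?_
      refine mul_le_mul (hL' i ℓ _) ?_ (norm_nonneg _) hβL
      have hblk := ih x z j
      rwa [← ContinuousLinearMap.comp_assoc] at hblk
    calc ‖(fderiv ℝ σ (E i ℓ (g i ℓ y))).comp ((fderiv ℝ (E i ℓ) (g i ℓ y)).comp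
            (∑ z, A i z • ((W ℓ).comp ((fderiv ℝ (L i ℓ) (y z)).comp
              ((ContinuousLinearMap.proj (R := ℝ)
                  (φ := fun _ : V => EuclideanSpace ℝ (Fin d)) z).comp
                (D.comp (coordIncl (EuclideanSpace ℝ (Fin d)) j)))))))‖
        ≤ cσ * (βE * (∑ z, A i z * (w * (βL *
            (cσ ^ ℓ * w ^ ℓ * (βE * βL) ^ ℓ * (A ^ ℓ) z j))))) := by
          refine (ContinuousLinearMap.opNorm_comp_le _ _).trans ?_
          refine mul_le_mul (hσ' _) ?_ (norm_nonneg _) hcσ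
          refine (ContinuousLinearMap.opNorm_comp_le _ _).trans ?_
          exact mul_le_mul (hE' i ℓ _) hsum (norm_nonneg _) hβE
      _ = cσ ^ (ℓ + 1) * w ^ (ℓ + 1) * (βE * βL) ^ (ℓ + 1) * (A ^ (ℓ + 1)) i j := by
          rw [pow_succ' A ℓ, Matrix.mul_apply]
          simp only [Finset.mul_sum]
          exact Finset.sum_congr rfl fun z _ => by ring
end

section
/- Let V be a finite vertex set, d ≥ 1, and let Ã : V × V → ℝ be a matrix with nonnegative entries. Fix c_σ, w ≥ 0. Let σ : ℝ^d → ℝ^d be differentiable with ‖Dσ(y)‖ ≤ c_σ for all y, and for each ℓ ∈ ℕ let W^(ℓ) : ℝ^d → ℝ^d be a linear map with operator norm ‖W^(ℓ)‖ ≤ w. Define layer maps F^(ℓ) : (V → ℝ^d) → (V → ℝ^d) by F^(ℓ)(x)_i = σ(∑_{z ∈ V} Ã_{iz} W^(ℓ) x_z), and set X^(ℓ) = F^(ℓ-1) ∘ ⋯ ∘ F^(0). Then for every ℓ ≥ 0, every x : V → ℝ^d, and all i, j ∈ V, the operator norm of the block of the total derivative of X^(ℓ) at x sending variations of the j-th input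 coordinate to the i-th output coordinate (i.e. the norm of π_i ∘ DX^(ℓ)(x) ∘ ι_j) is at most c_σ^ℓ w^ℓ (Ã^ℓ)_{ij}. -/
set_option maxHeartbeats 1000000 in
/-- The Euclidean special case (k = K = 0) of Theorem 1, recovering the classical GNN
Jacobian bound of di Giovanni et al.: for layer maps
`F ℓ x i = σ (∑ z, Ã i z • W ℓ (x z))` and compositions `X ℓ = F (ℓ-1) ∘ ⋯ ∘ F 0`,
the operator norm of the `(i, j)` block `π_i ∘ D(X ℓ)(x) ∘ ι_j` of the total
derivative is at most `cσ^ℓ * w^ℓ * (Ã^ℓ) i j`. -/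
theorem euclidean_gnn_jacobian_bound
    {V : Type*} [Fintype V] [DecidableEq V] {d : ℕ} (hd : 1 ≤ d)
    (A : Matrix V V ℝ) (hA : ∀ i j, 0 ≤ A i j)
    (cσ w : ℝ) (hcσ : 0 ≤ cσ) (hw : 0 ≤ w)
    (σ : EuclideanSpace ℝ (Fin d) → EuclideanSpace ℝ (Fin d))
    (hσ : Differentiable ℝ σ) (hσ' : ∀ y, ‖fderiv ℝ σ y‖ ≤ cσ)
    (W : ℕ → EuclideanSpace ℝ (Fin d) →L[ℝ] EuclideanSpace ℝ (Fin d))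
    (hW : ∀ ℓ, ‖W ℓ‖ ≤ w)
    (F : ℕ → (V → EuclideanSpace ℝ (Fin d)) → (V → EuclideanSpace ℝ (Fin d)))
    (hF : ∀ ℓ x i, F ℓ x i = σ (∑ z, A i z • W ℓ (x z)))
    (X : ℕ → (V → EuclideanSpace ℝ (Fin d)) → (V → EuclideanSpace ℝ (Fin d)))
    (hX0 : X 0 = id) (hXs : ∀ ℓ, X (ℓ + 1) = F ℓ ∘ X ℓ) :
    ∀ (ℓ : ℕ) (x : V → EuclideanSpace ℝ (Fin d)) (i j : V),
      ‖(ContinuousLinearMap.proj (R := ℝ)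
            (φ := fun _ : V => EuclideanSpace ℝ (Fin d)) i).comp
          ((fderiv ℝ (X ℓ) x).comp (coordIncl (EuclideanSpace ℝ (Fin d)) j))‖ ≤
        cσ ^ ℓ * w ^ ℓ * (A ^ ℓ) i j := by
  classical
  -- nonnegativity of matrix-power entries
  have hApow : ∀ ℓ (i j : V), 0 ≤ (A ^ ℓ) i j := by
    intro ℓ
    induction ℓ with
    | zero =>
      intro i j
      simp only [pow_zero, Matrix.one_apply]
      split <;> norm_num
    | succ n ih =>
      intro i j
      rw [pow_succ, Matrix.mul_apply]
      exact Finset.sum_nonneg fun z _ => mul_nonneg (ih i z) (hA z j)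
  -- pre-activation linear maps
  set G : ℕ → V → ((V → EuclideanSpace ℝ (Fin d)) →L[ℝ] EuclideanSpace ℝ (Fin d)) :=
    fun ℓ i => ∑ z, A i z • ((W ℓ).comp (ContinuousLinearMap.proj z)) with hG
  have hFeq : ∀ ℓ x i, F ℓ x i = σ (G ℓ i x) := by
    intro ℓ x i
    rw [hF]
    congr 1
    simp [hG]
  have hFderiv : ∀ ℓ y, HasFDerivAt (F ℓ)
      (ContinuousLinearMap.pi fun i => (fderiv ℝ σ (G ℓ i y)).comp (G ℓ i)) y := by
    intro ℓ y
    rw [hasFDerivAt_pi']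
    intro i
    have heq : (fun x => F ℓ x i) = fun x => σ (G ℓ i x) := funext fun x => hFeq ℓ x i
    rw [heq]
    exact ((hσ _).hasFDerivAt).comp y (G ℓ i).hasFDerivAt
  suffices h : ∀ ℓ, Differentiable ℝ (X ℓ) ∧
      ∀ (x : V → EuclideanSpace ℝ (Fin d)) (i j : V),
      ‖(ContinuousLinearMap.proj (R := ℝ)
            (φ := fun _ : V => EuclideanSpace ℝ (Fin d)) i).comp
          ((fderiv ℝ (X ℓ) x).comp (coordIncl (EuclideanSpace ℝ (Fin d)) j))‖ ≤
        cσ ^ ℓ * w ^ ℓ * (A ^ ℓ) i j by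
    intro ℓ; exact (h ℓ).2
  intro ℓ
  induction ℓ with
  | zero =>
    constructor
    · rw [hX0]; exact differentiable_id
    · intro x i j
      have hid : fderiv ℝ (X 0) x =
          ContinuousLinearMap.id ℝ (V → EuclideanSpace ℝ (Fin d)) := by
        rw [hX0]; exact fderiv_id
      rw [hid]
      have hcomp : (ContinuousLinearMap.proj (R := ℝ)
            (φ := fun _ : V => EuclideanSpace ℝ (Fin d)) i).comp
          ((ContinuousLinearMap.id ℝ (V → EuclideanSpace ℝ (Fin d))).comp
            (coordIncl (EuclideanSpace ℝ (Fin d)) j)) =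
          if i = j then ContinuousLinearMap.id ℝ (EuclideanSpace ℝ (Fin d)) else 0 := by
        ext v
        simp [coordIncl]
      rw [hcomp]
      simp only [pow_zero, one_mul, Matrix.one_apply]
      by_cases hij : i = j
      · rw [if_pos hij, if_pos hij]
        exact ContinuousLinearMap.norm_id_le
      · rw [if_neg hij, if_neg hij, norm_zero]
  | succ n ih =>
    obtain ⟨ihdiff, ihbound⟩ := ih
    have hdiffsucc : Differentiable ℝ (X (n + 1)) := by
      rw [hXs n]
      exact Differentiable.comp (fun y => (hFderiv n y).differentiableAt) ihdiff
    refine ⟨hdiffsucc, ?_⟩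
    intro x i j
    have hchain : fderiv ℝ (X (n + 1)) x =
        (ContinuousLinearMap.pi fun i =>
          (fderiv ℝ σ (G n i (X n x))).comp (G n i)).comp (fderiv ℝ (X n) x) := by
      rw [hXs n]
      rw [fderiv_comp x (hFderiv n (X n x)).differentiableAt (ihdiff x),
        (hFderiv n (X n x)).fderiv]
    rw [hchain]
    set M : EuclideanSpace ℝ (Fin d) →L[ℝ] (V → EuclideanSpace ℝ (Fin d)) :=
      (fderiv ℝ (X n) x).comp (coordIncl (EuclideanSpace ℝ (Fin d)) j) with hM
    have hre : (ContinuousLinearMap.proj (R := ℝ)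
          (φ := fun _ : V => EuclideanSpace ℝ (Fin d)) i).comp
        (((ContinuousLinearMap.pi fun i =>
          (fderiv ℝ σ (G n i (X n x))).comp (G n i)).comp (fderiv ℝ (X n) x)).comp
          (coordIncl (EuclideanSpace ℝ (Fin d)) j)) =
        (fderiv ℝ σ (G n i (X n x))).comp
          (∑ z, A i z • ((W n).comp
            ((ContinuousLinearMap.proj (R := ℝ)
              (φ := fun _ : V => EuclideanSpace ℝ (Fin d)) z).comp M))) := by
      ext v
      simp [hG, hM, ContinuousLinearMap.sum_apply, Finset.sum_apply, map_sum]
    rw [hre]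
    have hb1 : ‖∑ z, A i z • ((W n).comp
        ((ContinuousLinearMap.proj (R := ℝ)
          (φ := fun _ : V => EuclideanSpace ℝ (Fin d)) z).comp M))‖ ≤
        ∑ z, A i z * (w * (cσ ^ n * w ^ n * (A ^ n) z j)) := by
      refine (norm_sum_le _ _).trans (Finset.sum_le_sum fun z _ => ?_)
      refine (norm_smul_le (A i z) ((W n).comp ((ContinuousLinearMap.proj (R := ℝ)
        (φ := fun _ : V => EuclideanSpace ℝ (Fin d)) z).comp M))).trans ?_
      rw [Real.norm_eq_abs, abs_of_nonneg (hA i z)]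
      refine mul_le_mul_of_nonneg_left ?_ (hA i z)
      refine (ContinuousLinearMap.opNorm_comp_le _ _).trans ?_
      have h2 := ihbound x z j
      rw [← ContinuousLinearMap.comp_assoc] at h2
      rw [hM, ← ContinuousLinearMap.comp_assoc]
      exact mul_le_mul (hW n) h2 (norm_nonneg _) hw
    calc ‖(fderiv ℝ σ (G n i (X n x))).comp _‖
        ≤ cσ * (∑ z, A i z * (w * (cσ ^ n * w ^ n * (A ^ n) z j))) := by
          refine (ContinuousLinearMap.opNorm_comp_le _ _).trans ?_
          exact mul_le_mul (hσ' _) hb1 (norm_nonneg _) hcσ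
      _ = cσ ^ (n + 1) * w ^ (n + 1) * (A ^ (n + 1)) i j := by
          rw [pow_succ' A, Matrix.mul_apply, Finset.mul_sum, Finset.mul_sum]
          refine Finset.sum_congr rfl fun z _ => ?_
          ring
end
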